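/- Let x = (x₁,…,x_k) be a vector of positive integers with x₁+⋯+x_k = r and let n ≥ r. If F ⊆ [n]^(r) is a family such that the complete graph K_n has no x-acceptable Hamilton cycle with respect to F, then c(x)·x₁!·x₂!⋯x_k!·(n−r+k−1)! · |F| ≥ (n−1)!. In particular m(x,n) ≥ (n−1)! / (c(x)·x₁!⋯x_k!·(n−r+k−1)!). -/

import Mathlib

/-- A Hamilton cycle in the complete graph `K_n` is modelled as a cyclic ordering of the
vertex set, i.e. a bijection `c : ZMod n ≃ Fin n`; the vertices of the cycle in cyclic
order are `c 0, c 1, …, c (n-1)`.  `cycInterval c t x` is the interval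
`{c (t+1), c (t+2), …, c (t+x)}` of `x` consecutive vertices of the cycle. -/
def cycInterval {n : ℕ} (c : ZMod n ≃ Fin n) (t : ZMod n) (x : ℕ) : Finset (Fin n) :=
  (Finset.range x).image fun i : ℕ => c (t + (i : ZMod n) + 1)

/-- Given a vector `x = (x₁, …, x_k)` of positive integers and a family `F` of subsets
of the vertex set, a Hamilton cycle `c` of `K_n` is `x`-*acceptable* for `F` if there
do not exist `t₁, …, t_k` such that the union
`⋃ i, {c (tᵢ+1), …, c (tᵢ+xᵢ)}` is an element of `F`. -/
def IsXAcceptable {n k : ℕ} (x : Fin k → ℕ) (F : Set (Finset (Fin n)))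
    (c : ZMod n ≃ Fin n) : Prop :=
  ¬ ∃ t : Fin k → ZMod n,
      (Finset.univ.biUnion fun i : Fin k => cycInterval c (t i) (x i)) ∈ F

/-- `mxn x n` is the size of the smallest family `F` of `r`-element subsets of `[n]`
(where `r = x₁ + ⋯ + x_k`) such that `K_n` has no `x`-acceptable Hamilton cycle with
respect to `F`. -/
noncomputable def mxn {k : ℕ} (x : Fin k → ℕ) (n : ℕ) : ℕ :=
  sInf {m : ℕ | ∃ F : Set (Finset (Fin n)),
    (∀ A ∈ F, A.card = ∑ i : Fin k, x i) ∧ F.ncard = m ∧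
    ∀ c : ZMod n ≃ Fin n, ¬ IsXAcceptable x F c}

/-- `cX x r` is the number of unordered partitions of an `r`-element set into `k` parts
of sizes `x₁, x₂, …, x_k` (a partition is recorded as the finite set of its blocks, and
the multiset of block sizes must equal the multiset `{x₁, …, x_k}`). -/
noncomputable def cX {k : ℕ} (x : Fin k → ℕ) (r : ℕ) : ℕ :=
  Set.ncard {P : Finset (Finset (Fin r)) |
    (∀ A ∈ P, A.Nonempty) ∧
    (∀ A ∈ P, ∀ B ∈ P, A ≠ B → Disjoint A B) ∧
    P.biUnion id = Finset.univ ∧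
    P.val.map Finset.card = Finset.univ.val.map x}

namespace ALB
open Finset

variable {n : ℕ} [NeZero n]

/-- the arc `{u, u+1, …, u+len-1}` in `ZMod n`. -/
def arcF (u : ZMod n) (len : ℕ) : Finset (ZMod n) :=
  (Finset.range len).image fun j : ℕ => u + (j : ZMod n)

lemma mem_arcF {u z : ZMod n} {len : ℕ} :
    z ∈ arcF u len ↔ ∃ j < len, z = u + (j : ℕ) := by
  simp [arcF, eq_comm]

lemma natCast_inj_of_lt {a b : ℕ} (ha : a < n) (hb : b < n)
    (h : (a : ZMod n) = (b : ZMod n)) : a = b := by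
  have := congrArg ZMod.val h
  rwa [ZMod.val_cast_of_lt ha, ZMod.val_cast_of_lt hb] at this

lemma card_arcF (u : ZMod n) {len : ℕ} (h : len ≤ n) : (arcF u len).card = len := by
  rw [arcF, Finset.card_image_of_injOn, Finset.card_range]
  intro a ha b hb hab
  simp only [Finset.coe_range, Set.mem_Iio] at ha hb
  exact natCast_inj_of_lt (lt_of_lt_of_le ha h) (lt_of_lt_of_le hb h)
    (by have := add_left_cancel hab; exact_mod_cast this)

lemma start_mem_arcF {u : ZMod n} {len : ℕ} (h : 0 < len) : u ∈ arcF u len :=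
  mem_arcF.mpr ⟨0, h, by simp⟩

lemma sub_one_notMem_arcF {u : ZMod n} {len : ℕ} (h : len < n) :
    u - 1 ∉ arcF u len := by
  intro hmem
  obtain ⟨j, hj, hju⟩ := mem_arcF.mp hmem
  have : ((j + 1 : ℕ) : ZMod n) = 0 := by push_cast; linear_combination -hju + u - 1
  have hdvd : n ∣ j + 1 := (ZMod.natCast_eq_zero_iff _ _).mp this
  have := Nat.le_of_dvd (Nat.succ_pos j) hdvd
  omega

lemma arcF_start_spec {u p : ZMod n} {len : ℕ} (h0 : 0 < len) (hn : len < n) :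
    (p ∈ arcF u len ∧ p - 1 ∉ arcF u len) ↔ p = u := by
  constructor
  · rintro ⟨hp, hp1⟩
    obtain ⟨j, hj, rfl⟩ := mem_arcF.mp hp
    rcases Nat.eq_zero_or_pos j with rfl | hj0
    · simp
    · exfalso
      apply hp1
      refine mem_arcF.mpr ⟨j - 1, by omega, ?_⟩
      have : ((j : ℕ) : ZMod n) = ((j - 1 : ℕ) : ZMod n) + 1 := by
        have : j = (j - 1) + 1 := by omega
        rw [this]; push_cast; ring
      rw [this]; ring
  · rintro rfl
    exact ⟨start_mem_arcF h0, sub_one_notMem_arcF hn⟩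

/-- start of an arc: the unique element whose predecessor is not in the set. -/
noncomputable def arcStart (S : Finset (ZMod n)) : ZMod n :=
  if h : ∃ p, p ∈ S ∧ p - 1 ∉ S then h.choose else 0

lemma arcStart_arcF {u : ZMod n} {len : ℕ} (h0 : 0 < len) (hn : len < n) :
    arcStart (arcF u len) = u := by
  have hex : ∃ p, p ∈ arcF u len ∧ p - 1 ∉ arcF u len :=
    ⟨u, start_mem_arcF h0, sub_one_notMem_arcF hn⟩
  rw [arcStart, dif_pos hex]
  exact (arcF_start_spec h0 hn).mp hex.choose_spec

end ALB


namespace ALB2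
open Finset

variable {α : Type*} [DecidableEq α]

/-- enumerate the elements of `S` in increasing order of the (injective on `S`) key `f`. -/
noncomputable def sortEnum (S : Finset α) (f : α → ℕ) (hf : Set.InjOn f ↑S) :
    Fin S.card → α :=
  fun q =>
    (Finset.mem_image.mp
      ((S.image f).orderIsoOfFin (Finset.card_image_of_injOn hf) q).2).choose

variable {S : Finset α} {f : α → ℕ} (hf : Set.InjOn f ↑S)

lemma sortEnum_spec (q : Fin S.card) :
    sortEnum S f hf q ∈ S ∧
      f (sortEnum S f hf q) =
        ((S.image f).orderIsoOfFin (Finset.card_image_of_injOn hf) q : ℕ) :=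
  (Finset.mem_image.mp
      ((S.image f).orderIsoOfFin (Finset.card_image_of_injOn hf) q).2).choose_spec

lemma sortEnum_mem (q : Fin S.card) : sortEnum S f hf q ∈ S :=
  (sortEnum_spec hf q).1

lemma f_sortEnum (q : Fin S.card) :
    f (sortEnum S f hf q) =
      ((S.image f).orderIsoOfFin (Finset.card_image_of_injOn hf) q : ℕ) :=
  (sortEnum_spec hf q).2

lemma f_sortEnum_strictMono : StrictMono (fun q => f (sortEnum S f hf q)) := by
  intro q q' h
  simp only
  rw [f_sortEnum hf q, f_sortEnum hf q']
  exact_mod_cast ((S.image f).orderIsoOfFin (Finset.card_image_of_injOn hf)).strictMono h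

lemma sortEnum_surj {a : α} (ha : a ∈ S) : ∃ q, sortEnum S f hf q = a := by
  have hmem : f a ∈ S.image f := Finset.mem_image_of_mem f ha
  obtain ⟨q, hq⟩ :=
    ((S.image f).orderIsoOfFin (Finset.card_image_of_injOn hf)).surjective ⟨f a, hmem⟩
  refine ⟨q, hf (sortEnum_mem hf q) ha ?_⟩
  rw [f_sortEnum hf q, hq]

lemma sortEnum_injective : Function.Injective (sortEnum S f hf) := by
  intro q q' h
  by_contra hne
  rcases lt_or_gt_of_ne hne with hlt | hlt
  · exact absurd (congrArg f h) (ne_of_lt (f_sortEnum_strictMono hf hlt))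
  · exact absurd (congrArg f h).symm (ne_of_lt (f_sortEnum_strictMono hf hlt))

lemma sortEnum_eq_of_f_zero {a : α} (ha : a ∈ S) (h0 : f a = 0)
    (q : Fin S.card) (hq : q.val = 0) : sortEnum S f hf q = a := by
  obtain ⟨q', hq'⟩ := sortEnum_surj hf ha
  rcases eq_or_ne q' q with rfl | hne
  · exact hq'
  · exfalso
    have hlt : q < q' := by
      rcases lt_or_gt_of_ne hne with h | h
      · exact absurd (Fin.lt_iff_val_lt_val.mp h) (by omega)
      · exact h
    have := f_sortEnum_strictMono hf hlt
    simp only at this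
    rw [hq'] at this
    omega

end ALB2

namespace ALB3
open Finset ALB ALB2

variable {n k : ℕ} [NeZero n]

/-- positions occupied by a vertex set. -/
def pos (c : ZMod n ≃ Fin n) (T : Finset (Fin n)) : Finset (ZMod n) := T.image c.symm

lemma pos_cycInterval (c : ZMod n ≃ Fin n) (t : ZMod n) (l : ℕ) :
    pos c (cycInterval c t l) = arcF (t + 1) l := by
  unfold pos cycInterval arcF
  rw [Finset.image_image]
  apply Finset.image_congr
  intro j _
  simp only [Function.comp_apply, Equiv.symm_apply_apply]
  ring

lemma card_cycInterval_le (c : ZMod n ≃ Fin n) (t : ZMod n) (l : ℕ) :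
    (cycInterval c t l).card ≤ l :=
  le_trans Finset.card_image_le (le_of_eq (Finset.card_range l))

section BlockFacts

variable {r : ℕ} {x : Fin k → ℕ} {c : ZMod n ≃ Fin n} {t : Fin k → ZMod n}
  (hx : ∀ i, 0 < x i) (hr : ∑ i : Fin k, x i = r)
  (hU : (Finset.univ.biUnion fun i : Fin k => cycInterval c (t i) (x i)).card = r)

include hx hr hU

lemma card_block (i : Fin k) : (cycInterval c (t i) (x i)).card = x i := by
  have h1 : ∑ i : Fin k, (cycInterval c (t i) (x i)).card = ∑ i : Fin k, x i := by
    have hle : ∑ i : Fin k, (cycInterval c (t i) (x i)).card ≤ ∑ i : Fin k, x i :=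
      Finset.sum_le_sum fun i _ => card_cycInterval_le c (t i) (x i)
    have hge : r ≤ ∑ i : Fin k, (cycInterval c (t i) (x i)).card :=
      hU ▸ Finset.card_biUnion_le
    omega
  exact (Finset.sum_eq_sum_iff_of_le
    (fun i _ => card_cycInterval_le c (t i) (x i))).mp h1 i (Finset.mem_univ i)

lemma block_disjoint {i j : Fin k} (hij : i ≠ j) :
    Disjoint (cycInterval c (t i) (x i)) (cycInterval c (t j) (x j)) := by
  set B := fun i => cycInterval c (t i) (x i) with hB
  have hU' : Finset.univ.biUnion B = (B i) ∪ ((Finset.univ.erase i).biUnion B) := by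
    conv_lhs => rw [← Finset.insert_erase (Finset.mem_univ i)]
    exact Finset.biUnion_insert
  have hcard' : ((Finset.univ.erase i).biUnion B).card ≤ ∑ j ∈ Finset.univ.erase i, x j :=
    le_trans Finset.card_biUnion_le
      (Finset.sum_le_sum fun j _ => card_cycInterval_le c (t j) (x j))
  have hsplit : x i + ∑ j ∈ Finset.univ.erase i, x j = r := by
    rw [← hr, Finset.add_sum_erase _ x (Finset.mem_univ i)]
  have hinter : (B i ∩ (Finset.univ.erase i).biUnion B).card = 0 := by
    have h2 := Finset.card_union_add_card_inter (B i) ((Finset.univ.erase i).biUnion B)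
    rw [← hU'] at h2
    have hBi : (B i).card ≤ x i := card_cycInterval_le c (t i) (x i)
    omega
  rw [Finset.disjoint_iff_inter_eq_empty]
  have hsub : B i ∩ B j ⊆ B i ∩ (Finset.univ.erase i).biUnion B := by
    apply Finset.inter_subset_inter (le_refl _)
    intro v hv
    exact Finset.mem_biUnion.mpr ⟨j, Finset.mem_erase.mpr ⟨hij.symm, Finset.mem_univ j⟩, hv⟩
  have := Finset.card_eq_zero.mp (Nat.eq_zero_of_le_zero (le_trans (Finset.card_le_card hsub) (le_of_eq hinter)))
  exact this

lemma block_injOn : Set.InjOn (fun i => cycInterval c (t i) (x i)) ↑(Finset.univ : Finset (Fin k)) := by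
  intro i _ j _ hij
  simp only at hij
  by_contra hne
  have hd := block_disjoint hx hr hU (t := t) hne
  rw [hij] at hd
  have hemp : cycInterval c (t j) (x j) = ∅ :=
    Finset.bot_eq_empty ▸ disjoint_self.mp hd
  have hcard := card_block hx hr hU j
  rw [hemp] at hcard
  simp at hcard
  have := hx j
  omega

end BlockFacts

section TokenStruct

/-- start position of a token (an arc on the cycle). -/
noncomputable def stt (c : ZMod n ≃ Fin n) (T : Finset (Fin n)) : ZMod n :=
  arcStart (pos c T)

/-- offset of the start of token `T` from the start of the anchor token `B₀`. -/
noncomputable def offv (c : ZMod n ≃ Fin n) (B₀ T : Finset (Fin n)) : ℕ :=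
  (stt c T - stt c B₀).val

/-- cumulative lengths of the first tokens. -/
def Ofun {m : ℕ} (tokfn : Fin m → Finset (Fin n)) (v : ℕ) : ℕ :=
  ∑ q ∈ Finset.univ.filter (fun q : Fin m => q.val < v), (tokfn q).card

variable {c : ZMod n ≃ Fin n} {Tokens : Finset (Finset (Fin n))} {B₀ : Finset (Fin n)}
  (hne : ∀ T ∈ Tokens, T.Nonempty)
  (hdisj : ∀ T ∈ Tokens, ∀ T' ∈ Tokens, T ≠ T' → Disjoint T T')
  (hcov : Tokens.biUnion id = Finset.univ)
  (harc : ∀ T ∈ Tokens, ∃ u, pos c T = arcF u T.card)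
  (hm2 : 2 ≤ Tokens.card)
  (hB₀ : B₀ ∈ Tokens)

include hdisj hcov in
lemma sum_card_tokens : ∑ T ∈ Tokens, T.card = n := by
  have h1 : (Tokens.biUnion id).card = ∑ T ∈ Tokens, T.card :=
    Finset.card_biUnion (fun T hT T' hT' h => hdisj T hT T' hT' h)
  rw [hcov] at h1
  simp only [Finset.card_univ, Fintype.card_fin] at h1
  exact h1.symm

include hne hdisj hcov hm2 in
lemma card_token_lt {T : Finset (Fin n)} (hT : T ∈ Tokens) : T.card < n := by
  have hsum := sum_card_tokens hdisj hcov
  rw [← Finset.add_sum_erase _ _ hT] at hsum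
  have h1 : (Tokens.erase T).card ≤ ∑ T' ∈ Tokens.erase T, T'.card := by
    calc (Tokens.erase T).card = ∑ _T' ∈ Tokens.erase T, 1 := by simp
    _ ≤ _ := Finset.sum_le_sum fun T' hT' =>
        Finset.card_pos.mpr (hne T' (Finset.mem_of_mem_erase hT'))
  have h2 : 1 ≤ (Tokens.erase T).card := by
    have := Finset.card_erase_of_mem hT
    omega
  omega

include hne hdisj hcov hm2 harc in
lemma pos_eq_arc {T : Finset (Fin n)} (hT : T ∈ Tokens) :
    pos c T = arcF (stt c T) T.card := by
  obtain ⟨u, hu⟩ := harc T hT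
  have : stt c T = u := by
    rw [stt, hu, arcStart_arcF (Finset.card_pos.mpr (hne T hT))
      (card_token_lt hne hdisj hcov hm2 hT)]
  rw [this, hu]

include hne hdisj hcov hm2 harc in
lemma stt_mem_pos {T : Finset (Fin n)} (hT : T ∈ Tokens) : stt c T ∈ pos c T := by
  rw [pos_eq_arc hne hdisj hcov harc hm2 hT]
  exact start_mem_arcF (Finset.card_pos.mpr (hne T hT))

include hdisj in
lemma pos_disjoint {T T' : Finset (Fin n)} (hT : T ∈ Tokens) (hT' : T' ∈ Tokens)
    (h : T ≠ T') : Disjoint (pos c T) (pos c T') := by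
  unfold pos
  rw [Finset.disjoint_image c.symm.injective]
  exact hdisj T hT T' hT' h

include hne hdisj hcov hm2 harc in
lemma stt_injOn : Set.InjOn (stt c) ↑Tokens := by
  intro T hT T' hT' h
  by_contra hcon
  have hd := pos_disjoint (c := c) hdisj hT hT' hcon
  exact Finset.disjoint_left.mp hd (stt_mem_pos hne hdisj hcov harc hm2 hT)
    (h ▸ stt_mem_pos hne hdisj hcov harc hm2 hT')

include hne hdisj hcov hm2 harc in
lemma offv_injOn : Set.InjOn (offv c B₀) ↑Tokens := by
  intro T hT T' hT' h
  apply stt_injOn hne hdisj hcov harc hm2 hT hT'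
  have hval : stt c T - stt c B₀ = stt c T' - stt c B₀ := by
    unfold offv at h
    have hc := congrArg (Nat.cast : ℕ → ZMod n) h
    rwa [ZMod.natCast_val, ZMod.natCast_val, ZMod.cast_id, ZMod.cast_id] at hc
  exact sub_left_inj.mp hval

include hcov in
lemma pos_cover (z : ZMod n) : ∃ T ∈ Tokens, z ∈ pos c T := by
  have h1 : c z ∈ Tokens.biUnion id := by rw [hcov]; exact Finset.mem_univ _
  obtain ⟨T, hT, hz⟩ := Finset.mem_biUnion.mp h1
  exact ⟨T, hT, Finset.mem_image.mpr ⟨c z, hz, by simp⟩⟩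

lemma offv_self : offv c B₀ B₀ = 0 := by
  unfold offv; rw [sub_self, ZMod.val_zero]

lemma Ofun_zero {m : ℕ} (tokfn : Fin m → Finset (Fin n)) : Ofun tokfn 0 = 0 := by
  simp [Ofun]

lemma Ofun_succ {m : ℕ} (tokfn : Fin m → Finset (Fin n)) {v : ℕ} (hv : v < m) :
    Ofun tokfn (v + 1) = Ofun tokfn v + (tokfn ⟨v, hv⟩).card := by
  unfold Ofun
  have hins : Finset.univ.filter (fun q : Fin m => q.val < v + 1) =
      insert ⟨v, hv⟩ (Finset.univ.filter (fun q : Fin m => q.val < v)) := by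
    ext q
    simp only [Finset.mem_filter, Finset.mem_univ, true_and, Finset.mem_insert, Fin.ext_iff]
    omega
  rw [hins, Finset.sum_insert (by simp)]
  ring

lemma card_filter_lt_fin {m v : ℕ} (hv : v ≤ m) :
    (Finset.univ.filter (fun q : Fin m => q.val < v)).card = v := by
  have h : (Finset.univ.filter (fun q : Fin m => q.val < v)).card = (Finset.range v).card := by
    apply Finset.card_bij (fun q _ => q.val)
    · intro q hq
      simp only [Finset.mem_filter, Finset.mem_univ, true_and] at hq
      exact Finset.mem_range.mpr hq
    · intro q hq q' hq' hqq; exact Fin.ext hqq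
    · intro j hj
      have hjv := Finset.mem_range.mp hj
      exact ⟨⟨j, lt_of_lt_of_le hjv hv⟩, by simp [hjv], rfl⟩
  rw [h, Finset.card_range]

include hne hdisj hcov in
lemma Ofun_add_rest (hinj : Set.InjOn (offv c B₀) ↑Tokens) {v : ℕ} (hv : v ≤ Tokens.card) :
    Ofun (ALB2.sortEnum Tokens (offv c B₀) hinj) v + (Tokens.card - v) ≤ n := by
  have htotal : ∑ q : Fin Tokens.card, ((ALB2.sortEnum Tokens (offv c B₀) hinj) q).card = n := by
    have hb : ∑ q : Fin Tokens.card, ((ALB2.sortEnum Tokens (offv c B₀) hinj) q).card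
        = ∑ T ∈ Tokens, T.card := by
      apply Finset.sum_bij (fun q _ => ALB2.sortEnum Tokens (offv c B₀) hinj q)
      · intro q _; exact sortEnum_mem hinj q
      · intro q _ q' _ h; exact sortEnum_injective hinj h
      · intro T hT
        obtain ⟨q, hq⟩ := sortEnum_surj hinj hT
        exact ⟨q, Finset.mem_univ q, hq⟩
      · intro q _; rfl
    rw [hb, sum_card_tokens hdisj hcov]
  have hsplit := Finset.sum_filter_add_sum_filter_not Finset.univ
    (fun q : Fin Tokens.card => q.val < v)
    (fun q => ((ALB2.sortEnum Tokens (offv c B₀) hinj) q).card)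
  rw [htotal] at hsplit
  have hrest : Tokens.card - v ≤
      ∑ q ∈ Finset.univ.filter (fun q : Fin Tokens.card => ¬ q.val < v),
        ((ALB2.sortEnum Tokens (offv c B₀) hinj) q).card := by
    calc Tokens.card - v
        = (Finset.univ.filter (fun q : Fin Tokens.card => ¬ q.val < v)).card := by
          have h1 := card_filter_lt_fin (m := Tokens.card) hv
          have h2 := Finset.card_filter_add_card_filter_not
            (s := (Finset.univ : Finset (Fin Tokens.card)))
            (p := fun q => q.val < v)
          simp only [Finset.card_univ, Fintype.card_fin] at h2
          omega
      _ = ∑ _q ∈ Finset.univ.filter (fun q : Fin Tokens.card => ¬ q.val < v), 1 := by simp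
      _ ≤ _ := Finset.sum_le_sum fun q hq =>
          Finset.card_pos.mpr (hne _ (sortEnum_mem hinj q))
  unfold Ofun
  omega

include hne hdisj hcov harc hm2 hB₀ in
lemma offv_tok_eq (hinj : Set.InjOn (offv c B₀) ↑Tokens) :
    ∀ v (hv : v < Tokens.card),
      offv c B₀ (ALB2.sortEnum Tokens (offv c B₀) hinj ⟨v, hv⟩) =
        Ofun (ALB2.sortEnum Tokens (offv c B₀) hinj) v := by
  intro v
  induction v with
  | zero =>
    intro hv
    rw [sortEnum_eq_of_f_zero hinj hB₀ (offv_self) ⟨0, hv⟩ rfl, offv_self, Ofun_zero]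
  | succ v ih =>
    intro hv
    have hv' : v < Tokens.card := Nat.lt_of_succ_lt hv
    have IH := ih hv'
    have hTvmem : ALB2.sortEnum Tokens (offv c B₀) hinj ⟨v, hv'⟩ ∈ Tokens :=
      sortEnum_mem hinj _
    have hℓpos : 0 < (ALB2.sortEnum Tokens (offv c B₀) hinj ⟨v, hv'⟩).card :=
      Finset.card_pos.mpr (hne _ hTvmem)
    have hOsucc := Ofun_succ (ALB2.sortEnum Tokens (offv c B₀) hinj) hv'
    have hOle := Ofun_add_rest hne hdisj hcov hinj (le_of_lt hv)
    have hO1lt : Ofun (ALB2.sortEnum Tokens (offv c B₀) hinj) (v + 1) < n := by omega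
    have hOvlt : Ofun (ALB2.sortEnum Tokens (offv c B₀) hinj) v < n := by omega
    set tok := ALB2.sortEnum Tokens (offv c B₀) hinj with htokdef
    set Ov := Ofun tok v with hOv
    set ℓ := (tok ⟨v, hv'⟩).card with hℓ
    set s0 := stt c B₀ with hs0
    have hsttv : stt c (tok ⟨v, hv'⟩) = s0 + ((Ov : ℕ) : ZMod n) := by
      have h1 : ((offv c B₀ (tok ⟨v, hv'⟩) : ℕ) : ZMod n) = stt c (tok ⟨v, hv'⟩) - s0 := by
        unfold offv; rw [ZMod.natCast_val, ZMod.cast_id, hs0]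
      rw [IH] at h1
      exact (eq_add_of_sub_eq h1.symm).trans (add_comm _ _)
    have hposv : pos c (tok ⟨v, hv'⟩) = arcF (s0 + ((Ov : ℕ) : ZMod n)) ℓ := by
      rw [pos_eq_arc hne hdisj hcov harc hm2 hTvmem, hsttv]
    set z := s0 + ((Ov + ℓ : ℕ) : ZMod n) with hz
    have hz1mem : z - 1 ∈ pos c (tok ⟨v, hv'⟩) := by
      rw [hposv, mem_arcF]
      refine ⟨ℓ - 1, by omega, ?_⟩
      have hc : ((Ov + ℓ : ℕ) : ZMod n) = ((Ov : ℕ) : ZMod n) + ((ℓ - 1 : ℕ) : ZMod n) + 1 := by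
        have h2 : Ov + ℓ = Ov + ((ℓ - 1) + 1) := by omega
        rw [h2]; push_cast; ring
      rw [hz, hc]; ring
    have hznot : z ∉ pos c (tok ⟨v, hv'⟩) := by
      rw [hposv, mem_arcF]
      rintro ⟨j, hj, hje⟩
      rw [hz] at hje
      have hc : ((Ov + ℓ : ℕ) : ZMod n) = ((Ov : ℕ) : ZMod n) + (j : ZMod n) := by
        have := hje
        have h3 : s0 + ((Ov + ℓ : ℕ) : ZMod n) = s0 + (((Ov : ℕ) : ZMod n) + (j : ZMod n)) := by
          rw [this]; ring
        exact add_left_cancel h3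
      have hc2 : ((ℓ : ℕ) : ZMod n) = ((j : ℕ) : ZMod n) := by
        push_cast at hc ⊢
        linear_combination hc
      have := natCast_inj_of_lt (by omega) (by omega) hc2
      omega
    obtain ⟨T₀, hT₀mem, hzT₀⟩ := pos_cover (c := c) hcov z
    have hT₀ne : T₀ ≠ tok ⟨v, hv'⟩ := by rintro rfl; exact hznot hzT₀
    have hz1not : z - 1 ∉ pos c T₀ := fun hmem =>
      (Finset.disjoint_left.mp (pos_disjoint (c := c) hdisj hT₀mem hTvmem hT₀ne) hmem) hz1mem
    have hsttT₀ : stt c T₀ = z := by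
      have hparc := pos_eq_arc hne hdisj hcov harc hm2 hT₀mem
      rw [hparc, mem_arcF] at hzT₀
      obtain ⟨j, hj, hje⟩ := hzT₀
      rcases Nat.eq_zero_or_pos j with rfl | hjpos
      · rw [hje]; simp
      · exfalso
        apply hz1not
        rw [hparc, mem_arcF]
        refine ⟨j - 1, by omega, ?_⟩
        rw [hje]
        have hc : ((j : ℕ) : ZMod n) = ((j - 1 : ℕ) : ZMod n) + 1 := by
          have h2 : j = (j - 1) + 1 := by omega
          conv_lhs => rw [h2]
          push_cast; ring
        rw [hc]; ring
    have hoffT₀ : offv c B₀ T₀ = Ov + ℓ := by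
      unfold offv
      rw [hsttT₀, hz, ← hs0]
      have hc : s0 + ((Ov + ℓ : ℕ) : ZMod n) - s0 = ((Ov + ℓ : ℕ) : ZMod n) := by ring
      rw [hc, ZMod.val_cast_of_lt (by omega)]
    obtain ⟨q₀, hq₀⟩ := sortEnum_surj hinj hT₀mem
    rw [← htokdef] at hq₀
    have hq₀gt : v < q₀.val := by
      by_contra hle
      push_neg at hle
      have hmono := (f_sortEnum_strictMono hinj).monotone
        (a := q₀) (b := ⟨v, hv'⟩) (Fin.le_def.mpr hle)
      rw [← htokdef] at hmono
      rw [hq₀, hoffT₀, IH] at hmono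
      omega
    have hub : offv c B₀ (tok ⟨v + 1, hv⟩) ≤ Ov + ℓ := by
      have hmono := (f_sortEnum_strictMono hinj).monotone
        (a := (⟨v + 1, hv⟩ : Fin Tokens.card)) (b := q₀) (Fin.le_def.mpr (by show v + 1 ≤ q₀.val; omega))
      rw [← htokdef, hq₀, hoffT₀] at hmono
      exact hmono
    have hlb : Ov < offv c B₀ (tok ⟨v + 1, hv⟩) := by
      have hmono := f_sortEnum_strictMono hinj
        (a := (⟨v, hv'⟩ : Fin Tokens.card)) (b := ⟨v + 1, hv⟩) (Fin.mk_lt_mk.mpr (by omega))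
      simp only at hmono
      rw [← htokdef, IH] at hmono
      exact hmono
    have hTv1mem : tok ⟨v + 1, hv⟩ ∈ Tokens := sortEnum_mem hinj _
    have hgap : ¬ (offv c B₀ (tok ⟨v + 1, hv⟩) < Ov + ℓ) := by
      intro hwlt
      set w := offv c B₀ (tok ⟨v + 1, hv⟩) with hw
      have hsttw : stt c (tok ⟨v + 1, hv⟩) = s0 + ((w : ℕ) : ZMod n) := by
        have h1 : ((w : ℕ) : ZMod n) = stt c (tok ⟨v + 1, hv⟩) - s0 := by
          rw [hw]; unfold offv; rw [ZMod.natCast_val, ZMod.cast_id, hs0]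
        exact (eq_add_of_sub_eq h1.symm).trans (add_comm _ _)
      have hmem1 : stt c (tok ⟨v + 1, hv⟩) ∈ pos c (tok ⟨v + 1, hv⟩) :=
        stt_mem_pos hne hdisj hcov harc hm2 hTv1mem
      have hmem2 : stt c (tok ⟨v + 1, hv⟩) ∈ pos c (tok ⟨v, hv'⟩) := by
        rw [hposv, mem_arcF]
        refine ⟨w - Ov, by omega, ?_⟩
        rw [hsttw]
        have hc : ((w : ℕ) : ZMod n) = ((Ov : ℕ) : ZMod n) + ((w - Ov : ℕ) : ZMod n) := by
          have h2 : w = Ov + (w - Ov) := by omega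
          conv_lhs => rw [h2]
          push_cast; ring
        rw [hc]; ring
      have hne1 : tok ⟨v + 1, hv⟩ ≠ tok ⟨v, hv'⟩ := by
        intro he
        have := sortEnum_injective hinj (htokdef ▸ he)
        simp [Fin.ext_iff] at this
      exact (Finset.disjoint_left.mp
        (pos_disjoint (c := c) hdisj hTv1mem hTvmem hne1) hmem1) hmem2
    rw [hOsucc]
    omega

lemma stt_eq_add_offv (c : ZMod n ≃ Fin n) (B₀ T : Finset (Fin n)) :
    stt c T = stt c B₀ + ((offv c B₀ T : ℕ) : ZMod n) := by
  unfold offv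
  rw [ZMod.natCast_val, ZMod.cast_id]
  ring

include hne hdisj hcov harc hm2 hB₀ in
lemma cycle_eq {c' : ZMod n ≃ Fin n}
    (harc' : ∀ T ∈ Tokens, ∃ u, pos c' T = arcF u T.card)
    (hinj : Set.InjOn (offv c B₀) ↑Tokens)
    (hinj' : Set.InjOn (offv c' B₀) ↑Tokens)
    (hs : stt c B₀ = stt c' B₀)
    (htok : ∀ q : Fin Tokens.card,
      ALB2.sortEnum Tokens (offv c B₀) hinj q = ALB2.sortEnum Tokens (offv c' B₀) hinj' q)
    (hval : ∀ T ∈ Tokens, ∀ j : ℕ, j < T.card →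
      c (stt c T + (j : ZMod n)) = c' (stt c' T + (j : ZMod n))) :
    c = c' := by
  have hstt : ∀ T ∈ Tokens, stt c T = stt c' T := by
    intro T hT
    obtain ⟨q, hq⟩ := sortEnum_surj hinj hT
    have h1 := offv_tok_eq hne hdisj hcov harc hm2 hB₀ hinj q.val q.isLt
    have h2 := offv_tok_eq hne hdisj hcov harc' hm2 hB₀ hinj' q.val q.isLt
    have hOf : Ofun (ALB2.sortEnum Tokens (offv c B₀) hinj) q.val
        = Ofun (ALB2.sortEnum Tokens (offv c' B₀) hinj') q.val := by
      unfold Ofun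
      exact Finset.sum_congr rfl fun q' _ => by rw [htok q']
    simp only [Fin.eta] at h1 h2
    rw [hq] at h1
    rw [← htok q, hq] at h2
    have hoffeq : offv c B₀ T = offv c' B₀ T := by rw [h1, h2, hOf]
    rw [stt_eq_add_offv c B₀ T, stt_eq_add_offv c' B₀ T, hs, hoffeq]
  apply Equiv.ext
  intro z
  obtain ⟨T, hT, hz⟩ := pos_cover (c := c) hcov z
  have hparc := pos_eq_arc hne hdisj hcov harc hm2 hT
  rw [hparc, mem_arcF] at hz
  obtain ⟨j, hj, rfl⟩ := hz
  rw [hval T hT j hj, hstt T hT]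

omit hne hdisj hcov harc hm2 hB₀ in
lemma stt_singleton {v : Fin n}
    (hparc : pos c ({v} : Finset (Fin n)) = arcF (stt c {v}) ({v} : Finset (Fin n)).card) :
    c (stt c ({v} : Finset (Fin n))) = v := by
  have h1 : stt c ({v} : Finset (Fin n)) ∈ pos c {v} := by
    rw [hparc]
    exact start_mem_arcF (by simp)
  unfold pos at h1
  rw [Finset.image_singleton, Finset.mem_singleton] at h1
  rw [h1, Equiv.apply_symm_apply]

end TokenStruct

section DataMap

variable {c : ZMod n ≃ Fin n} {Tokens : Finset (Finset (Fin n))} {B₀ : Finset (Fin n)}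
  {P : Finset (Finset (Fin n))}

/-- the data recorded about a cycle: the start of the anchor token, the order of the
vertices within each block, and the cyclic order of the tokens after the anchor. -/
noncomputable def dataOf (c : ZMod n ≃ Fin n) (Tokens : Finset (Finset (Fin n)))
    (B₀ : Finset (Fin n)) (P : Finset (Finset (Fin n)))
    (hinj : Set.InjOn (offv c B₀) ↑Tokens) (hB₀ : B₀ ∈ Tokens)
    (hparc : ∀ B ∈ P, pos c B = arcF (stt c B) B.card) (hm2 : 2 ≤ Tokens.card) :
    ZMod n ×
      ((B : {B // B ∈ P}) →
        (Fin (B : Finset (Fin n)).card ↪ {w // w ∈ (B : Finset (Fin n))})) ×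
      (Fin (Tokens.card - 1) ↪ {T // T ∈ Tokens.erase B₀}) := by
  refine ⟨stt c B₀,
    fun B => ⟨fun j => ⟨c (stt c B.1 + (j.val : ZMod n)), ?_⟩, ?_⟩,
    ⟨fun q => ⟨ALB2.sortEnum Tokens (offv c B₀) hinj
      ⟨q.val + 1, by have := q.isLt; omega⟩, ?_⟩, ?_⟩⟩
  · have hp := hparc B.1 B.2
    have hmem : stt c B.1 + (j.val : ZMod n) ∈ pos c B.1 := by
      rw [hp]
      exact mem_arcF.mpr ⟨j.val, j.isLt, rfl⟩
    obtain ⟨w, hw, hwe⟩ := Finset.mem_image.mp hmem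
    have hcw : c (stt c B.1 + (j.val : ZMod n)) = w := by
      rw [← hwe, Equiv.apply_symm_apply]
    rwa [hcw]
  · intro j j' h
    have h1 := Subtype.ext_iff.mp h
    simp only at h1
    have h2 := add_left_cancel (c.injective h1)
    have hcle : (B : Finset (Fin n)).card ≤ n := by
      have := Finset.card_le_univ (B : Finset (Fin n))
      simpa using this
    exact Fin.ext (natCast_inj_of_lt (lt_of_lt_of_le j.isLt hcle)
      (lt_of_lt_of_le j'.isLt hcle) h2)
  · have h0 : ALB2.sortEnum Tokens (offv c B₀) hinj ⟨0, by omega⟩ = B₀ :=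
      sortEnum_eq_of_f_zero hinj hB₀ offv_self _ rfl
    refine Finset.mem_erase.mpr ⟨?_, sortEnum_mem hinj _⟩
    intro heq
    have := sortEnum_injective hinj (heq.trans h0.symm)
    simp [Fin.ext_iff] at this
  · intro q q' h
    have h1 := Subtype.ext_iff.mp h
    simp only at h1
    have h2 := sortEnum_injective hinj h1
    simp only [Fin.mk.injEq] at h2
    exact Fin.ext (by omega)

lemma data_injective
    (hne : ∀ T ∈ Tokens, T.Nonempty)
    (hdisj : ∀ T ∈ Tokens, ∀ T' ∈ Tokens, T ≠ T' → Disjoint T T')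
    (hcov : Tokens.biUnion id = Finset.univ)
    (hm2 : 2 ≤ Tokens.card) (hB₀ : B₀ ∈ Tokens)
    {c c' : ZMod n ≃ Fin n}
    (harc : ∀ T ∈ Tokens, ∃ u, pos c T = arcF u T.card)
    (harc' : ∀ T ∈ Tokens, ∃ u, pos c' T = arcF u T.card)
    (hinj : Set.InjOn (offv c B₀) ↑Tokens)
    (hinj' : Set.InjOn (offv c' B₀) ↑Tokens)
    (hPT : P ⊆ Tokens)
    (hsing : ∀ T ∈ Tokens, T ∉ P → ∃ v, T = {v})
    (hparc : ∀ B ∈ P, pos c B = arcF (stt c B) B.card)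
    (hparc' : ∀ B ∈ P, pos c' B = arcF (stt c' B) B.card)
    (h : dataOf c Tokens B₀ P hinj hB₀ hparc hm2
        = dataOf c' Tokens B₀ P hinj' hB₀ hparc' hm2) :
    c = c' := by
  have hs : stt c B₀ = stt c' B₀ := by
    have h1 : (dataOf c Tokens B₀ P hinj hB₀ hparc hm2).1
        = (dataOf c' Tokens B₀ P hinj' hB₀ hparc' hm2).1 := by rw [h]
    exact h1
  have hval2 : ∀ (B : {B // B ∈ P}) (j : Fin (B : Finset (Fin n)).card),
      c (stt c B.1 + (j.val : ZMod n)) = c' (stt c' B.1 + (j.val : ZMod n)) := by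
    intro B j
    have h2 : (dataOf c Tokens B₀ P hinj hB₀ hparc hm2).2.1 B j
        = (dataOf c' Tokens B₀ P hinj' hB₀ hparc' hm2).2.1 B j := by rw [h]
    exact Subtype.ext_iff.mp h2
  have htokq : ∀ q : Fin Tokens.card,
      ALB2.sortEnum Tokens (offv c B₀) hinj q
        = ALB2.sortEnum Tokens (offv c' B₀) hinj' q := by
    intro q
    rcases Nat.eq_zero_or_pos q.val with h0 | hposq
    · rw [sortEnum_eq_of_f_zero hinj hB₀ offv_self q h0,
        sortEnum_eq_of_f_zero hinj' hB₀ offv_self q h0]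
    · have hlt : q.val - 1 < Tokens.card - 1 := by have := q.isLt; omega
      have h3 : (dataOf c Tokens B₀ P hinj hB₀ hparc hm2).2.2 ⟨q.val - 1, hlt⟩
          = (dataOf c' Tokens B₀ P hinj' hB₀ hparc' hm2).2.2 ⟨q.val - 1, hlt⟩ := by rw [h]
      have h4 := Subtype.ext_iff.mp h3
      have hq : q = (⟨(⟨q.val - 1, hlt⟩ : Fin (Tokens.card - 1)).val + 1,
          show q.val - 1 + 1 < Tokens.card by have := q.isLt; omega⟩ : Fin Tokens.card) :=
        Fin.ext (show q.val = q.val - 1 + 1 by omega)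
      rw [hq]
      exact h4
  have hvalT : ∀ T ∈ Tokens, ∀ j : ℕ, j < T.card →
      c (stt c T + (j : ZMod n)) = c' (stt c' T + (j : ZMod n)) := by
    intro T hT j hj
    by_cases hTP : T ∈ P
    · exact hval2 ⟨T, hTP⟩ ⟨j, hj⟩
    · obtain ⟨v, rfl⟩ := hsing T hT hTP
      have hj0 : j = 0 := by simpa using hj
      subst hj0
      simp only [Nat.cast_zero, add_zero]
      rw [stt_singleton (c := c) (pos_eq_arc hne hdisj hcov harc hm2 hT),
        stt_singleton (c := c') (pos_eq_arc hne hdisj hcov harc' hm2 hT)]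
  exact cycle_eq hne hdisj hcov harc hm2 hB₀ harc' hinj hinj' hs htokq hvalT

end DataMap

lemma arcF_one (u : ZMod n) : arcF u 1 = {u} := by
  ext z
  simp [mem_arcF]

lemma prod_card_factorial {k : ℕ} {x : Fin k → ℕ} {P : Finset (Finset (Fin n))}
    (hPm : P.val.map Finset.card = Finset.univ.val.map x) :
    ∏ B : {B // B ∈ P}, Nat.factorial (B : Finset (Fin n)).card
      = ∏ i : Fin k, Nat.factorial (x i) := by
  rw [Finset.prod_coe_sort P (fun B => Nat.factorial B.card)]
  rw [Finset.prod_eq_multiset_prod, Finset.prod_eq_multiset_prod]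
  have h1 : P.val.map (fun B => Nat.factorial B.card)
      = (P.val.map Finset.card).map Nat.factorial := by
    rw [Multiset.map_map]; rfl
  have h2 : (Finset.univ.val.map fun i : Fin k => Nat.factorial (x i))
      = (Finset.univ.val.map x).map Nat.factorial := by
    rw [Multiset.map_map]; rfl
  rw [h1, h2, hPm]

section FiberBound

lemma fiber_bound {k r : ℕ} (x : Fin k → ℕ) (hx : ∀ i, 0 < x i)
    (hr : ∑ i : Fin k, x i = r) (hrn : r ≤ n) (hm2' : 2 ≤ k + (n - r))
    (tw : (ZMod n ≃ Fin n) → Fin k → ZMod n)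
    {A : Finset (Fin n)} (hA : A.card = r)
    {P : Finset (Finset (Fin n))}
    (hPA : P.biUnion id = A)
    (hPm : P.val.map Finset.card = Finset.univ.val.map x)
    (hPd : ∀ B ∈ P, ∀ B' ∈ P, B ≠ B' → Disjoint B B') :
    (Finset.univ.filter (fun c : ZMod n ≃ Fin n =>
        Finset.univ.biUnion (fun i => cycInterval c (tw c i) (x i)) = A ∧
        Finset.univ.image (fun i => cycInterval c (tw c i) (x i)) = P)).card
      ≤ n * (∏ i : Fin k, Nat.factorial (x i)) * Nat.factorial (k + (n - r) - 1) := by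
  classical
  set Tokens := P ∪ (Aᶜ.image fun v => ({v} : Finset (Fin n))) with hTok
  have hPT : P ⊆ Tokens := Finset.subset_union_left
  have hPsub : ∀ B ∈ P, B ⊆ A := by
    intro B hB
    rw [← hPA]
    exact Finset.subset_biUnion_of_mem id hB
  have hPne : ∀ B ∈ P, B.Nonempty := by
    intro B hB
    have hmem : B.card ∈ Multiset.map Finset.card P.val :=
      Multiset.mem_map_of_mem _ hB
    rw [hPm] at hmem
    obtain ⟨i, _, hi⟩ := Multiset.mem_map.mp hmem
    exact Finset.card_pos.mp (hi ▸ hx i)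
  have hsing : ∀ T ∈ Tokens, T ∉ P → ∃ v, T = {v} := by
    intro T hT hTP
    rcases Finset.mem_union.mp hT with h | h
    · exact absurd h hTP
    · obtain ⟨v, _, rfl⟩ := Finset.mem_image.mp h
      exact ⟨v, rfl⟩
  have hTne : ∀ T ∈ Tokens, T.Nonempty := by
    intro T hT
    rcases Finset.mem_union.mp hT with h | h
    · exact hPne T h
    · obtain ⟨v, _, rfl⟩ := Finset.mem_image.mp h
      exact ⟨v, Finset.mem_singleton_self v⟩
  have hTdisj : ∀ T ∈ Tokens, ∀ T' ∈ Tokens, T ≠ T' → Disjoint T T' := by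
    intro T hT T' hT' hnt
    rcases Finset.mem_union.mp hT with h | h <;> rcases Finset.mem_union.mp hT' with h' | h'
    · exact hPd T h T' h' hnt
    · obtain ⟨v, hv, rfl⟩ := Finset.mem_image.mp h'
      rw [Finset.disjoint_singleton_right]
      exact fun hvT => Finset.mem_compl.mp hv (hPsub T h hvT)
    · obtain ⟨v, hv, rfl⟩ := Finset.mem_image.mp h
      rw [Finset.disjoint_singleton_left]
      exact fun hvT => Finset.mem_compl.mp hv (hPsub T' h' hvT)
    · obtain ⟨v, hv, rfl⟩ := Finset.mem_image.mp h
      obtain ⟨v', hv', rfl⟩ := Finset.mem_image.mp h'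
      rw [Finset.disjoint_singleton_right, Finset.mem_singleton]
      exact fun he => hnt (by rw [he])
  have hTcov : Tokens.biUnion id = Finset.univ := by
    apply Finset.eq_univ_of_forall
    intro w
    rw [Finset.mem_biUnion]
    by_cases hw : w ∈ A
    · rw [← hPA] at hw
      obtain ⟨B, hB, hwB⟩ := Finset.mem_biUnion.mp hw
      exact ⟨B, Finset.mem_union_left _ hB, hwB⟩
    · exact ⟨{w}, Finset.mem_union_right _
        (Finset.mem_image_of_mem _ (Finset.mem_compl.mpr hw)),
        Finset.mem_singleton_self w⟩
  have hPk : P.card = k := by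
    have hc := congrArg Multiset.card hPm
    rw [Multiset.card_map, Multiset.card_map] at hc
    simpa using hc
  have hdisjPS : Disjoint P (Aᶜ.image fun v => ({v} : Finset (Fin n))) := by
    rw [Finset.disjoint_right]
    intro T hT hTP
    obtain ⟨v, hv, rfl⟩ := Finset.mem_image.mp hT
    exact Finset.mem_compl.mp hv (hPsub _ hTP (Finset.mem_singleton_self v))
  have hTcard : Tokens.card = k + (n - r) := by
    rw [hTok, Finset.card_union_of_disjoint hdisjPS, hPk,
      Finset.card_image_of_injective _ Finset.singleton_injective,
      Finset.card_compl, hA, Fintype.card_fin]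
  have hm2 : 2 ≤ Tokens.card := by rw [hTcard]; exact hm2'
  obtain ⟨B₀, hB₀⟩ : Tokens.Nonempty := Finset.card_pos.mp (by omega)
  have harcOf : ∀ c : ZMod n ≃ Fin n,
      (Finset.univ.biUnion (fun i => cycInterval c (tw c i) (x i)) = A ∧
        Finset.univ.image (fun i => cycInterval c (tw c i) (x i)) = P) →
      ∀ T ∈ Tokens, ∃ u, pos c T = arcF u T.card := by
    intro c hc T hT
    obtain ⟨hcA, hcP⟩ := hc
    have hU : (Finset.univ.biUnion fun i => cycInterval c (tw c i) (x i)).card = r := by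
      rw [hcA, hA]
    rcases Finset.mem_union.mp hT with hblk | hsgl
    · rw [← hcP] at hblk
      obtain ⟨i, _, rfl⟩ := Finset.mem_image.mp hblk
      refine ⟨tw c i + 1, ?_⟩
      rw [pos_cycInterval, card_block hx hr hU i]
    · obtain ⟨v, _, rfl⟩ := Finset.mem_image.mp hsgl
      refine ⟨c.symm v, ?_⟩
      unfold pos
      rw [Finset.image_singleton, Finset.card_singleton, arcF_one]
  have hcardErase : Fintype.card {T // T ∈ Tokens.erase B₀} = Tokens.card - 1 := by
    rw [Fintype.card_coe, Finset.card_erase_of_mem hB₀]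
  haveI hDne : Nonempty (ZMod n ×
      ((B : {B // B ∈ P}) →
        (Fin (B : Finset (Fin n)).card ↪ {w // w ∈ (B : Finset (Fin n))})) ×
      (Fin (Tokens.card - 1) ↪ {T // T ∈ Tokens.erase B₀})) := by
    refine ⟨0, fun B => ?_, ?_⟩
    · exact (Fintype.equivFinOfCardEq (Fintype.card_coe _)).symm.toEmbedding
    · exact (Fintype.equivFinOfCardEq hcardErase).symm.toEmbedding
  set f := (fun c : ZMod n ≃ Fin n =>
      if hc : (Finset.univ.biUnion (fun i => cycInterval c (tw c i) (x i)) = A ∧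
          Finset.univ.image (fun i => cycInterval c (tw c i) (x i)) = P) then
        dataOf c Tokens B₀ P
          (offv_injOn hTne hTdisj hTcov (harcOf c hc) hm2) hB₀
          (fun B hB => pos_eq_arc hTne hTdisj hTcov (harcOf c hc) hm2 (hPT hB)) hm2
      else Classical.arbitrary _) with hfdef
  have hinjOn : Set.InjOn f ↑(Finset.univ.filter (fun c : ZMod n ≃ Fin n =>
        Finset.univ.biUnion (fun i => cycInterval c (tw c i) (x i)) = A ∧
        Finset.univ.image (fun i => cycInterval c (tw c i) (x i)) = P)) := by
    intro c hc c' hc' hfeq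
    simp only [Finset.mem_coe, Finset.mem_filter] at hc hc'
    rw [hfdef] at hfeq
    simp only at hfeq
    rw [dif_pos hc.2, dif_pos hc'.2] at hfeq
    exact data_injective hTne hTdisj hTcov hm2 hB₀
      (harcOf c hc.2) (harcOf c' hc'.2) _ _ hPT hsing _ _ hfeq
  have hmain := Finset.card_le_card_of_injOn f (fun _ _ => Finset.mem_univ _) hinjOn
  refine le_trans hmain (le_of_eq ?_)
  rw [Finset.card_univ, Fintype.card_prod, Fintype.card_prod, ZMod.card]
  have h2 : Fintype.card ((B : {B // B ∈ P}) →
      (Fin (B : Finset (Fin n)).card ↪ {w // w ∈ (B : Finset (Fin n))}))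
      = ∏ i : Fin k, Nat.factorial (x i) := by
    rw [Fintype.card_pi]
    have hB : ∀ B : {B // B ∈ P},
        Fintype.card (Fin (B : Finset (Fin n)).card ↪ {w // w ∈ (B : Finset (Fin n))})
          = Nat.factorial (B : Finset (Fin n)).card := by
      intro B
      rw [Fintype.card_embedding_eq, Fintype.card_coe, Fintype.card_fin,
        Nat.descFactorial_self]
    rw [Finset.prod_congr rfl (fun B _ => hB B)]
    exact prod_card_factorial hPm
  have h3 : Fintype.card (Fin (Tokens.card - 1) ↪ {T // T ∈ Tokens.erase B₀})
      = Nat.factorial (k + (n - r) - 1) := by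
    rw [Fintype.card_embedding_eq, hcardErase, Fintype.card_fin,
      Nat.descFactorial_self, hTcard]
  rw [h2, h3, mul_assoc]

end FiberBound

section Parts

open Classical in
/-- candidate partitions of `A` into blocks with sizes given by `x`. -/
noncomputable def partsOf {k : ℕ} (x : Fin k → ℕ) (A : Finset (Fin n)) :
    Finset (Finset (Finset (Fin n))) :=
  Finset.univ.filter (fun P =>
    P.biUnion id = A ∧ P.val.map Finset.card = Finset.univ.val.map x ∧
    ∀ B ∈ P, ∀ B' ∈ P, B ≠ B' → Disjoint B B')

lemma partsOf_card_le {k r : ℕ} (x : Fin k → ℕ) (hx : ∀ i, 0 < x i)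
    {A : Finset (Fin n)} (hA : A.card = r) :
    (partsOf x A).card ≤ cX x r := by
  classical
  have hfin : {P : Finset (Finset (Fin r)) |
      (∀ B ∈ P, B.Nonempty) ∧
      (∀ B ∈ P, ∀ B' ∈ P, B ≠ B' → Disjoint B B') ∧
      P.biUnion id = Finset.univ ∧
      P.val.map Finset.card = Finset.univ.val.map x}.Finite := Set.toFinite _
  rw [cX, Set.ncard_eq_toFinset_card _ hfin]
  set fA : Fin r → Fin n := fun j => ((A.orderIsoOfFin hA) j : Fin n) with hfA
  have hfAinj : Function.Injective fA :=
    fun a b h => (A.orderIsoOfFin hA).injective (Subtype.ext h)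
  have hfAmem : ∀ j, fA j ∈ A := fun j => ((A.orderIsoOfFin hA) j).2
  have hfAsurj : ∀ v ∈ A, ∃ j, fA j = v := by
    intro v hv
    obtain ⟨j, hj⟩ := (A.orderIsoOfFin hA).surjective ⟨v, hv⟩
    exact ⟨j, by rw [hfA]; exact congrArg Subtype.val hj⟩
  set g : Finset (Fin n) → Finset (Fin r) :=
    fun B => Finset.univ.filter (fun j => fA j ∈ B) with hg
  have hginv : ∀ B ⊆ A, (g B).image fA = B := by
    intro B hBA
    ext v
    simp only [hg, Finset.mem_image, Finset.mem_filter, Finset.mem_univ, true_and]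
    constructor
    · rintro ⟨j, hj, rfl⟩; exact hj
    · intro hv
      obtain ⟨j, hj⟩ := hfAsurj v (hBA hv)
      exact ⟨j, by rw [hj]; exact hv, hj⟩
  have hgcard : ∀ B ⊆ A, (g B).card = B.card := by
    intro B hBA
    conv_rhs => rw [← hginv B hBA]
    rw [Finset.card_image_of_injective _ hfAinj]
  apply Finset.card_le_card_of_injOn (fun P => P.image g)
  · intro P hP
    simp only [Finset.mem_coe, partsOf, Finset.mem_filter, Finset.mem_univ, true_and] at hP
    obtain ⟨hPA, hPm, hPd⟩ := hP
    have hPsub : ∀ B ∈ P, B ⊆ A := by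
      intro B hB
      rw [← hPA]
      exact Finset.subset_biUnion_of_mem id hB
    have hPne : ∀ B ∈ P, B.Nonempty := by
      intro B hB
      have hmem : B.card ∈ Multiset.map Finset.card P.val :=
        Multiset.mem_map_of_mem _ hB
      rw [hPm] at hmem
      obtain ⟨i, _, hi⟩ := Multiset.mem_map.mp hmem
      exact Finset.card_pos.mp (hi ▸ hx i)
    have hginjP : Set.InjOn g ↑P := by
      intro B hB B' hB' hge
      rw [← hginv B (hPsub B hB), ← hginv B' (hPsub B' hB'), hge]
    rw [Finset.mem_coe, Set.Finite.mem_toFinset]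
    refine ⟨?_, ?_, ?_, ?_⟩
    · intro Bq hBq
      obtain ⟨B, hB, rfl⟩ := Finset.mem_image.mp hBq
      rw [← Finset.card_pos, hgcard B (hPsub B hB), Finset.card_pos]
      exact hPne B hB
    · intro X hX Y hY hXY
      obtain ⟨B, hB, rfl⟩ := Finset.mem_image.mp hX
      obtain ⟨B', hB', rfl⟩ := Finset.mem_image.mp hY
      have hBB' : B ≠ B' := fun he => hXY (by rw [he])
      rw [Finset.disjoint_left]
      intro j hj hj'
      simp only [hg, Finset.mem_filter, Finset.mem_univ, true_and] at hj hj'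
      exact Finset.disjoint_left.mp (hPd B hB B' hB' hBB') hj hj'
    · apply Finset.eq_univ_of_forall
      intro j
      have hj : fA j ∈ A := hfAmem j
      rw [← hPA] at hj
      obtain ⟨B, hB, hjB⟩ := Finset.mem_biUnion.mp hj
      refine Finset.mem_biUnion.mpr ⟨g B, Finset.mem_image_of_mem g hB, ?_⟩
      simp only [hg, id, Finset.mem_filter, Finset.mem_univ, true_and]
      exact hjB
    · rw [Finset.image_val_of_injOn hginjP, Multiset.map_map, ← hPm]
      apply Multiset.map_congr rfl
      intro B hB
      simp only [Function.comp_apply]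
      exact hgcard B (hPsub B hB)
  · intro P hP P' hP' he
    simp only at he
    simp only [Finset.mem_coe, partsOf, Finset.mem_filter, Finset.mem_univ, true_and] at hP hP'
    have recov : ∀ (Q : Finset (Finset (Fin n))), Q.biUnion id = A →
        (Q.image g).image (fun Bq => Bq.image fA) = Q := by
      intro Q hQA
      rw [Finset.image_image]
      calc Q.image ((fun Bq => Bq.image fA) ∘ g)
          = Q.image id := Finset.image_congr (by
            intro B hB
            simp only [Function.comp_apply, id]
            exact hginv B (by rw [← hQA]; exact Finset.subset_biUnion_of_mem id hB))
        _ = Q := Finset.image_id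
    rw [← recov P hP.1, ← recov P' hP'.1, he]

end Parts
end ALB3

open ALB ALB2 ALB3 in
lemma main_bound {k r n : ℕ} (hk : 0 < k) (x : Fin k → ℕ)
    (hx : ∀ i, 0 < x i) (hr : ∑ i : Fin k, x i = r) (hn : r ≤ n)
    (G : Set (Finset (Fin n))) (hG : ∀ A ∈ G, A.card = r)
    (hblock : ∀ c : ZMod n ≃ Fin n, ¬ IsXAcceptable x G c) :
    Nat.factorial (n - 1) ≤
      cX x r * (∏ i : Fin k, Nat.factorial (x i)) * Nat.factorial (n - r + k - 1)
        * G.ncard := by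
  classical
  have hrk : k ≤ r := by
    rw [← hr]
    calc k = ∑ _i : Fin k, 1 := by simp
    _ ≤ ∑ i : Fin k, x i := Finset.sum_le_sum fun i _ => hx i
  have hn1 : 1 ≤ n := le_trans (le_trans hk hrk) hn
  haveI : NeZero n := ⟨by omega⟩
  have e0 : ZMod n ≃ Fin n := (Fintype.equivFin (ZMod n)).trans (finCongr (ZMod.card n))
  have hGfin : G.Finite := Set.toFinite G
  have hGne : G.Nonempty := by
    obtain ⟨t0, ht0⟩ := not_not.mp (hblock e0)
    exact ⟨_, ht0⟩
  have hGpos : 1 ≤ G.ncard := by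
    rw [Nat.one_le_iff_ne_zero]
    exact fun h0 => hGne.ne_empty ((Set.ncard_eq_zero hGfin).mp h0)
  by_cases hdeg : 2 ≤ k + (n - r)
  · -- main case
    set tw : (ZMod n ≃ Fin n) → Fin k → ZMod n :=
      fun c => (not_not.mp (hblock c)).choose with htw
    have htwspec : ∀ c : ZMod n ≃ Fin n,
        (Finset.univ.biUnion fun i => cycInterval c (tw c i) (x i)) ∈ G :=
      fun c => (not_not.mp (hblock c)).choose_spec
    set K := n * (∏ i : Fin k, Nat.factorial (x i)) * Nat.factorial (k + (n - r) - 1)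
      with hK
    set t : Finset (Finset (Fin n) × Finset (Finset (Fin n))) :=
      hGfin.toFinset.biUnion (fun A => (partsOf x A).image (fun P => (A, P))) with ht
    have hmemt : ∀ c : ZMod n ≃ Fin n,
        ((Finset.univ.biUnion fun i => cycInterval c (tw c i) (x i)),
         (Finset.univ.image fun i => cycInterval c (tw c i) (x i))) ∈ t := by
      intro c
      rw [ht, Finset.mem_biUnion]
      refine ⟨_, hGfin.mem_toFinset.mpr (htwspec c), Finset.mem_image_of_mem _ ?_⟩
      have hU : (Finset.univ.biUnion fun i => cycInterval c (tw c i) (x i)).card = r :=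
        hG _ (htwspec c)
      simp only [partsOf, Finset.mem_filter, Finset.mem_univ, true_and]
      refine ⟨?_, ?_, ?_⟩
      · ext v
        simp only [Finset.mem_biUnion, Finset.mem_image, Finset.mem_univ, true_and, id]
        constructor
        · rintro ⟨B, ⟨i, rfl⟩, hv⟩
          exact ⟨i, hv⟩
        · rintro ⟨i, hv⟩
          exact ⟨_, ⟨i, rfl⟩, hv⟩
      · rw [Finset.image_val_of_injOn (block_injOn hx hr hU), Multiset.map_map]
        apply Multiset.map_congr rfl
        intro i _
        simp only [Function.comp_apply]
        exact card_block hx hr hU i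
      · intro B hB B' hB' hBne
        obtain ⟨i, _, rfl⟩ := Finset.mem_image.mp hB
        obtain ⟨i', _, rfl⟩ := Finset.mem_image.mp hB'
        exact block_disjoint hx hr hU (fun he => hBne (by rw [he]))
    have hcount := Finset.card_eq_sum_card_fiberwise
      (f := fun c : ZMod n ≃ Fin n =>
        ((Finset.univ.biUnion fun i => cycInterval c (tw c i) (x i)),
         (Finset.univ.image fun i => cycInterval c (tw c i) (x i))))
      (s := Finset.univ) (t := t) (fun c _ => hmemt c)
    have hfib : ∀ p ∈ t,
        (Finset.univ.filter (fun c : ZMod n ≃ Fin n =>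
          ((Finset.univ.biUnion fun i => cycInterval c (tw c i) (x i)),
           (Finset.univ.image fun i => cycInterval c (tw c i) (x i))) = p)).card ≤ K := by
      rintro ⟨A, P⟩ hp
      rw [ht, Finset.mem_biUnion] at hp
      obtain ⟨A', hA', hp2⟩ := hp
      obtain ⟨P', hP', hPe⟩ := Finset.mem_image.mp hp2
      obtain ⟨rfl, rfl⟩ := Prod.mk.inj hPe
      have hA : A'.card = r := hG A' (hGfin.mem_toFinset.mp hA')
      simp only [partsOf, Finset.mem_filter, Finset.mem_univ, true_and] at hP'
      have hb := fiber_bound x hx hr hn hdeg tw hA hP'.1 hP'.2.1 hP'.2.2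
      refine le_trans (le_of_eq (congrArg Finset.card (Finset.filter_congr ?_))) hb
      intro c _
      exact Prod.ext_iff
    have hcards : Fintype.card (ZMod n ≃ Fin n) = Nat.factorial n := by
      rw [Fintype.card_equiv e0, ZMod.card]
    have htcard : t.card ≤ G.ncard * cX x r := by
      rw [ht]
      calc (hGfin.toFinset.biUnion fun A => (partsOf x A).image (fun P => (A, P))).card
          ≤ ∑ A ∈ hGfin.toFinset, ((partsOf x A).image (fun P => (A, P))).card :=
            Finset.card_biUnion_le
        _ ≤ ∑ _A ∈ hGfin.toFinset, cX x r := Finset.sum_le_sum (fun A hA => by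
            rw [Finset.card_image_of_injective _ (fun P Q h => (Prod.ext_iff.mp h).2)]
            exact partsOf_card_le x hx (hG A (hGfin.mem_toFinset.mp hA)))
        _ = hGfin.toFinset.card * cX x r := by rw [Finset.sum_const, smul_eq_mul]
        _ = G.ncard * cX x r := by rw [Set.ncard_eq_toFinset_card _ hGfin]
    have hchain : Nat.factorial n ≤ G.ncard * cX x r * K := by
      calc Nat.factorial n = Fintype.card (ZMod n ≃ Fin n) := hcards.symm
      _ = (Finset.univ : Finset (ZMod n ≃ Fin n)).card := Finset.card_univ.symm
      _ = ∑ p ∈ t, (Finset.univ.filter (fun c : ZMod n ≃ Fin n =>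
          ((Finset.univ.biUnion fun i => cycInterval c (tw c i) (x i)),
           (Finset.univ.image fun i => cycInterval c (tw c i) (x i))) = p)).card := hcount
      _ ≤ ∑ _p ∈ t, K := Finset.sum_le_sum hfib
      _ = t.card * K := by rw [Finset.sum_const, smul_eq_mul]
      _ ≤ G.ncard * cX x r * K := Nat.mul_le_mul_right K htcard
    have hfac : n * Nat.factorial (n - 1) = Nat.factorial n :=
      Nat.mul_factorial_pred (by omega)
    have hre : k + (n - r) - 1 = n - r + k - 1 := by omega
    rw [hK, hre] at hchain
    have h2 : n * Nat.factorial (n - 1)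
        ≤ n * (cX x r * (∏ i : Fin k, Nat.factorial (x i))
            * Nat.factorial (n - r + k - 1) * G.ncard) := by
      rw [hfac]
      calc Nat.factorial n
          ≤ G.ncard * cX x r * (n * (∏ i : Fin k, Nat.factorial (x i))
              * Nat.factorial (n - r + k - 1)) := hchain
        _ = n * (cX x r * (∏ i : Fin k, Nat.factorial (x i))
              * Nat.factorial (n - r + k - 1) * G.ncard) := by ring
    exact Nat.le_of_mul_le_mul_left h2 (by omega)
  · -- degenerate case : k = 1, r = n
    have hk1 : k = 1 := by omega
    have hrn : r = n := by omega
    subst hk1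
    haveI : Nonempty (Fin r) := ⟨⟨0, by omega⟩⟩
    have hx0 : x 0 = r := by rw [← hr, Fin.sum_univ_one]
    have hP0 : ({(Finset.univ : Finset (Fin r))} : Finset (Finset (Fin r))) ∈
        {P : Finset (Finset (Fin r)) |
          (∀ A ∈ P, A.Nonempty) ∧
          (∀ A ∈ P, ∀ B ∈ P, A ≠ B → Disjoint A B) ∧
          P.biUnion id = Finset.univ ∧
          P.val.map Finset.card = Finset.univ.val.map x} := by
      refine ⟨?_, ?_, ?_, ?_⟩
      · intro B hB
        rw [Finset.mem_singleton] at hB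
        subst hB
        exact Finset.univ_nonempty
      · intro B hB B' hB' hne
        rw [Finset.mem_singleton] at hB hB'
        exact absurd (hB.trans hB'.symm) hne
      · rw [Finset.singleton_biUnion, id]
      · have h1 : (Finset.univ : Finset (Fin 1)) = {0} := by decide
        rw [h1, Finset.singleton_val, Finset.singleton_val, Multiset.map_singleton,
          Multiset.map_singleton, Finset.card_univ, Fintype.card_fin, hx0]
    have hcX : 1 ≤ cX x r := by
      rw [Nat.one_le_iff_ne_zero, cX]
      intro h0
      rw [Set.ncard_eq_zero (Set.toFinite _), Set.eq_empty_iff_forall_notMem] at h0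
      exact h0 _ hP0
    have hprod : (∏ i : Fin 1, Nat.factorial (x i)) = Nat.factorial r := by
      rw [Fin.prod_univ_one, hx0]
    have hnk : n - r + 1 - 1 = 0 := by omega
    rw [hprod, hnk]
    calc Nat.factorial (n - 1) ≤ Nat.factorial n := Nat.factorial_le (by omega)
    _ = Nat.factorial r := by rw [hrn]
    _ = 1 * Nat.factorial r * Nat.factorial 0 * 1 := by simp [Nat.factorial]
    _ ≤ cX x r * Nat.factorial r * Nat.factorial 0 * G.ncard := by
        apply Nat.mul_le_mul (Nat.mul_le_mul (Nat.mul_le_mul hcX (le_refl _)) (le_refl _)) hGpos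

/-- **Theorem (averaging lower bound).**  Let `x = (x₁, …, x_k)` be a vector of positive
integers with `x₁ + ⋯ + x_k = r` and `n ≥ r`.  If `F` is a family of `r`-element subsets
of `[n]` such that `K_n` has no `x`-acceptable Hamilton cycle with respect to `F`, then
`c(x)·x₁!·x₂!⋯x_k!·(n−r+k−1)!·|F| ≥ (n−1)!`.  In particular
`m(x,n) ≥ (n−1)!/(c(x)·x₁!⋯x_k!·(n−r+k−1)!)`. -/
theorem averaging_lower_bound {k r n : ℕ} (hk : 0 < k) (x : Fin k → ℕ)
    (hx : ∀ i, 0 < x i) (hr : ∑ i : Fin k, x i = r) (hn : r ≤ n)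
    (F : Set (Finset (Fin n))) (hF : ∀ A ∈ F, A.card = r)
    (hblock : ∀ c : ZMod n ≃ Fin n, ¬ IsXAcceptable x F c) :
    Nat.factorial (n - 1) ≤
      cX x r * (∏ i : Fin k, Nat.factorial (x i)) * Nat.factorial (n - r + k - 1)
        * F.ncard ∧
    Nat.factorial (n - 1) ≤
      cX x r * (∏ i : Fin k, Nat.factorial (x i)) * Nat.factorial (n - r + k - 1)
        * mxn x n := by
  refine ⟨main_bound hk x hx hr hn F hF hblock, ?_⟩
  have hSne : {m : ℕ | ∃ F' : Set (Finset (Fin n)),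
      (∀ A ∈ F', A.card = ∑ i : Fin k, x i) ∧ F'.ncard = m ∧
      ∀ c : ZMod n ≃ Fin n, ¬ IsXAcceptable x F' c}.Nonempty :=
    ⟨F.ncard, F, fun A hA => by rw [hr]; exact hF A hA, rfl, hblock⟩
  obtain ⟨F₀, hF₀c, hF₀n, hF₀b⟩ := Nat.sInf_mem hSne
  have h2 := main_bound hk x hx hr hn F₀ (fun A hA => by rw [← hr]; exact hF₀c A hA) hF₀b
  rw [hF₀n] at h2
  exact h2
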